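/- Let H ⊆ C_b(Ω) be a reproducing kernel Hilbert space of bounded continuous functions on Ω whose kernel k is bounded (sup_{x∈Ω} k(x,x) < ∞), and assume H is invariant under the Koopman operator, i.e., Kf ∈ H for every f ∈ H. Then K : H → H is a bounded (equivalently, closed) linear operator. -/

import Mathlib

open MeasureTheory ProbabilityTheory Filter Topology
open scoped RealInnerProductSpace

/-- Let `H ⊆ C_b(Ω)` be an RKHS of bounded continuous functions on `Ω`
with bounded kernel (`sup_{x∈Ω} k(x,x) < ∞`, encoded by the bound `M` on `⟪Φ x, Φ x⟫`),
and assume `H` is invariant under the Koopman operator, i.e. there is `Koop : H → H` with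
`(Koop f)(x) = ∫_Ω f dρ_x` for all `f ∈ H` and `x ∈ Ω`.  Then `Koop` is a bounded
linear operator on `H`. -/
theorem koopman_RKHS_invariance_bounded
    {n : ℕ} (hn : 1 ≤ n)
    (Ω : Set (EuclideanSpace ℝ (Fin n)))
    (hΩne : Ω.Nonempty) (hΩopen : IsOpen Ω) (hΩbdd : Bornology.IsBounded Ω)
    (ρ : ProbabilityTheory.Kernel (EuclideanSpace ℝ (Fin n)) (EuclideanSpace ℝ (Fin n)))
    [IsMarkovKernel ρ] (hρΩ : ∀ x ∈ Ω, ρ x Ω = 1)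
    {H : Type*} [NormedAddCommGroup H] [InnerProductSpace ℝ H] [CompleteSpace H]
    -- the elements of `H` are (bounded continuous) functions on `Ω`,
    -- realized through the linear evaluation map `ev`
    (ev : H →ₗ[ℝ] (EuclideanSpace ℝ (Fin n) → ℝ))
    (hev_inj : ∀ f : H, (∀ x ∈ Ω, ev f x = 0) → f = 0)
    (hev_cont : ∀ f : H, ContinuousOn (ev f) Ω)
    (hev_bdd : ∀ f : H, ∃ M, ∀ x ∈ Ω, |ev f x| ≤ M)
    -- canonical features and the reproducing property
    (Φ : EuclideanSpace ℝ (Fin n) → H)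
    (hrepr : ∀ (f : H), ∀ x ∈ Ω, ev f x = ⟪f, Φ x⟫)
    -- the kernel `k(x,y) = ⟪Φ x, Φ y⟫` is bounded on the diagonal
    (M : ℝ) (hM : ∀ x ∈ Ω, ⟪Φ x, Φ x⟫ ≤ M)
    -- invariance: the Koopman operator maps `H` into `H`
    (Koop : H → H)
    (hKoop : ∀ (f : H), ∀ x ∈ Ω, ev (Koop f) x = ∫ y in Ω, ev f y ∂(ρ x)) :
    (∀ f g : H, Koop (f + g) = Koop f + Koop g) ∧
    (∀ (c : ℝ) (f : H), Koop (c • f) = c • Koop f) ∧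
    (∃ C : ℝ, ∀ f : H, ‖Koop f‖ ≤ C * ‖f‖) := by
  -- integrability of `ev f` on `Ω` w.r.t. each `ρ x`
  have hint : ∀ (f : H) (x : EuclideanSpace ℝ (Fin n)),
      IntegrableOn (ev f) Ω (ρ x) := by
    intro f x
    obtain ⟨Mf, hMf⟩ := hev_bdd f
    refine ⟨(hev_cont f).aestronglyMeasurable hΩopen.measurableSet, ?_⟩
    apply MeasureTheory.HasFiniteIntegral.of_bounded (C := Mf)
    refine (ae_restrict_iff' hΩopen.measurableSet).2 (ae_of_all _ ?_)
    intro y hy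
    simpa [Real.norm_eq_abs] using hMf y hy
  -- additivity
  have hadd : ∀ f g : H, Koop (f + g) = Koop f + Koop g := by
    intro f g
    have h0 : ∀ x ∈ Ω, ev (Koop (f + g) - (Koop f + Koop g)) x = 0 := by
      intro x hx
      have h1 : ev (Koop (f + g)) x = ∫ y in Ω, (ev f y + ev g y) ∂(ρ x) := by
        simpa [map_add] using hKoop (f + g) x hx
      have h2 := hKoop f x hx
      have h3 := hKoop g x hx
      have h4 : (∫ y in Ω, (ev f y + ev g y) ∂(ρ x))
          = (∫ y in Ω, ev f y ∂(ρ x)) + ∫ y in Ω, ev g y ∂(ρ x) :=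
        integral_add (hint f x) (hint g x)
      simp only [map_sub, map_add, Pi.sub_apply, Pi.add_apply]
      rw [h1, h4, h2, h3]; ring
    have := hev_inj _ h0
    exact sub_eq_zero.mp this
  -- homogeneity
  have hsmul : ∀ (c : ℝ) (f : H), Koop (c • f) = c • Koop f := by
    intro c f
    have h0 : ∀ x ∈ Ω, ev (Koop (c • f) - c • Koop f) x = 0 := by
      intro x hx
      have h1 : ev (Koop (c • f)) x = ∫ y in Ω, c * ev f y ∂(ρ x) := by
        have := hKoop (c • f) x hx
        rw [ev.map_smul] at this
        simpa using this
      have h2 := hKoop f x hx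
      have h4 : (∫ y in Ω, c * ev f y ∂(ρ x)) = c * ∫ y in Ω, ev f y ∂(ρ x) := by
        simpa using integral_smul (μ := (ρ x).restrict Ω) c (fun y => ev f y)
      have h5 : ev (c • Koop f) x = c * ev (Koop f) x := by
        rw [ev.map_smul]; rfl
      simp only [map_sub, Pi.sub_apply]
      rw [h1, h4, h5, h2]; ring
    have := hev_inj _ h0
    exact sub_eq_zero.mp this
  refine ⟨hadd, hsmul, ?_⟩
  -- package `Koop` as a linear map
  set L : H →ₗ[ℝ] H :=
    { toFun := Koop
      map_add' := hadd
      map_smul' := hsmul } with hL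
  -- bound on the features
  have hMnn : 0 ≤ M := hΩne.elim fun x hx => le_trans real_inner_self_nonneg (hM x hx)
  have hΦ : ∀ x ∈ Ω, ‖Φ x‖ ≤ Real.sqrt M := by
    intro x hx
    have : ‖Φ x‖ ^ 2 ≤ M := by
      rw [← real_inner_self_eq_norm_sq]; exact hM x hx
    calc ‖Φ x‖ = Real.sqrt (‖Φ x‖ ^ 2) := by
            rw [Real.sqrt_sq (norm_nonneg _)]
      _ ≤ Real.sqrt M := Real.sqrt_le_sqrt this
  -- pointwise bound on `ev`
  have hev_le : ∀ (f : H), ∀ x ∈ Ω, |ev f x| ≤ Real.sqrt M * ‖f‖ := by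
    intro f x hx
    rw [hrepr f x hx]
    calc |⟪f, Φ x⟫| ≤ ‖f‖ * ‖Φ x‖ := abs_real_inner_le_norm f (Φ x)
      _ ≤ ‖f‖ * Real.sqrt M := by
          exact mul_le_mul_of_nonneg_left (hΦ x hx) (norm_nonneg f)
      _ = Real.sqrt M * ‖f‖ := mul_comm _ _
  -- closed graph
  have hcont : Continuous L := by
    apply L.continuous_of_seq_closed_graph
    intro u f g hu hKu
    have key : ∀ x ∈ Ω, ev g x = ev (Koop f) x := by
      intro x hx
      -- `ev (Koop (u m)) x` converges to `ev g x`
      have t1 : Tendsto (fun m => ev (Koop (u m)) x) atTop (𝓝 (ev g x)) := by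
        have : Tendsto (fun m => ⟪(L ∘ u) m, Φ x⟫) atTop (𝓝 ⟪g, Φ x⟫) :=
          hKu.inner tendsto_const_nhds
        rw [hrepr g x hx]
        simpa [hrepr _ x hx, hL] using this
      -- `ev (Koop (u m)) x` converges to `ev (Koop f) x`
      have t2 : Tendsto (fun m => ev (Koop (u m)) x) atTop (𝓝 (ev (Koop f) x)) := by
        have hdiff : ∀ m, |ev (Koop (u m)) x - ev (Koop f) x|
            ≤ Real.sqrt M * ‖u m - f‖ := by
          intro m
          have h1 := hKoop (u m) x hx
          have h2 := hKoop f x hx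
          have heq : ev (Koop (u m)) x - ev (Koop f) x
              = ∫ y in Ω, (ev (u m) y - ev f y) ∂(ρ x) := by
            rw [h1, h2, integral_sub (hint (u m) x) (hint f x)]
          rw [heq]
          have hb : ∀ y ∈ Ω, ‖ev (u m) y - ev f y‖ ≤ Real.sqrt M * ‖u m - f‖ := by
            intro y hy
            have : ev (u m) y - ev f y = ev (u m - f) y := by simp [map_sub]
            rw [Real.norm_eq_abs, this]
            exact hev_le (u m - f) y hy
          have hfin : (ρ x) Ω < ⊤ := lt_of_le_of_lt prob_le_one (by norm_num)
          calc |∫ y in Ω, (ev (u m) y - ev f y) ∂(ρ x)|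
              ≤ Real.sqrt M * ‖u m - f‖ * ((ρ x) Ω).toReal := by
                simpa [Real.norm_eq_abs, Measure.real] using
                  norm_setIntegral_le_of_norm_le_const hfin hb
            _ ≤ Real.sqrt M * ‖u m - f‖ := by
                have h1 : ((ρ x) Ω).toReal ≤ 1 := by
                  rw [hρΩ x hx]; simp
                nlinarith [mul_nonneg (Real.sqrt_nonneg M) (norm_nonneg (u m - f))]
        have hz : Tendsto (fun m => Real.sqrt M * ‖u m - f‖) atTop (𝓝 0) := by
          have : Tendsto (fun m => ‖u m - f‖) atTop (𝓝 0) := by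
            simpa using (tendsto_sub_nhds_zero_iff.2 hu).norm
          simpa using this.const_mul (Real.sqrt M)
        have : Tendsto (fun m => ev (Koop (u m)) x - ev (Koop f) x) atTop (𝓝 0) := by
          apply squeeze_zero_norm _ hz
          intro m
          simpa [Real.norm_eq_abs] using hdiff m
        simpa using this.add_const (ev (Koop f) x)
      exact tendsto_nhds_unique t1 t2
    have h0 : ∀ x ∈ Ω, ev (g - Koop f) x = 0 := by
      intro x hx
      simp [map_sub, key x hx]
    exact sub_eq_zero.mp (hev_inj _ h0)
  obtain ⟨C, hCpos, hC⟩ := SemilinearMapClass.bound_of_continuous L hcont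
  exact ⟨C, fun f => hC f⟩
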